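/- With notation as in the triangular-array construction, Var(I_n) = ⌈Λ_n⌉ σ_{1,n}², where σ_{1,n}² = (λ P² m_{H²}/Λ_n) ∫₀^n G²(t) μ(t) dt − (λ² P² m_H² / Λ_n²)(∫₀^n G(t) μ(t) dt)², and lim_{n→∞} Var(I_n) = λ P² m_{H²} ∫₀^∞ G²(t) μ(t) dt, provided Λ_n → ∞ and ∫₀^∞ G(t) μ(t) dt, ∫₀^∞ G²(t) μ(t) dt < ∞. -/

import Mathlib

open MeasureTheory ProbabilityTheory Filter

lemma integrable_of_integral_ne_zero' {α : Type*} [MeasurableSpace α] {μ : Measure α}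
    {f : α → ℝ} (h : ∫ x, f x ∂μ ≠ 0) : Integrable f μ := by
  by_contra hf; exact h (integral_undef hf)

lemma iIndepFun_congr_ae {Ω ι : Type*} {β : ι → Type*} [MeasurableSpace Ω] {μ : Measure Ω}
    [m : ∀ i, MeasurableSpace (β i)] {f g : ∀ i, Ω → β i}
    (h : iIndepFun f μ) (hfg : ∀ i, f i =ᵐ[μ] g i) : iIndepFun g μ := by
  rw [iIndepFun_iff_measure_inter_preimage_eq_mul] at h ⊢
  intro S sets hsets
  have hpre : ∀ i, (f i ⁻¹' sets i : Set Ω) =ᵐ[μ] (g i ⁻¹' sets i) := by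
    intro i
    filter_upwards [hfg i] with ω hω
    exact congrArg (· ∈ sets i) hω
  have hall : ∀ᵐ ω ∂μ, ∀ i ∈ S, f i ω = g i ω :=
    (Filter.eventually_all_finset S).2 fun i _ => hfg i
  have h1 : μ (⋂ i ∈ S, f i ⁻¹' sets i) = μ (⋂ i ∈ S, g i ⁻¹' sets i) := by
    apply measure_congr
    filter_upwards [hall] with ω hω
    have hiff : (ω ∈ ⋂ i ∈ S, f i ⁻¹' sets i) ↔ (ω ∈ ⋂ i ∈ S, g i ⁻¹' sets i) := by
      simp only [Set.mem_iInter, Set.mem_preimage]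
      exact ⟨fun hm i hi => (hω i hi) ▸ hm i hi, fun hm i hi => (hω i hi).symm ▸ hm i hi⟩
    exact eq_iff_iff.2 hiff
  rw [← h1, h S hsets]
  exact Finset.prod_congr rfl fun i hi => measure_congr (hpre i)

/-- Lemma 7 (variance part): Var(Iₙ) = ⌈Λₙ⌉ σ₁ₙ² with
σ₁ₙ² = (λP²m_{H²}/Λₙ)∫₀ⁿ G²μ − (λ²P²m_H²/Λₙ²)(∫₀ⁿ Gμ)², and
Var(Iₙ) → λ P² m_{H²} ∫₀^∞ G² μ as n → ∞. -/
theorem stmt13 {Ω : Type*} [MeasureSpace Ω] [IsProbabilityMeasure (volume : Measure Ω)]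
    (U : ℕ → ℕ → Ω → ℝ) (H : ℕ → Ω → ℝ) (lam P mH mH2 : ℝ) (μ q G : ℝ → ℝ)
    (hlam : 0 < lam) (hP : 0 < P)
    (hμmeas : Measurable μ) (hμnn : ∀ t, 0 ≤ μ t)
    (hqmeas : Measurable q) (hqnn : ∀ h, 0 ≤ q h)
    (hGmeas : Measurable G) (hGnn : ∀ t, 0 ≤ G t) (MG : ℝ) (hGbd : ∀ t, G t ≤ MG)
    (Λ : ℕ → ℝ) (hΛ : ∀ n, Λ n = lam * ∫ t in Set.Icc (0 : ℝ) (n : ℝ), μ t)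
    (hΛpos : ∀ n, 0 < Λ n) (hΛtop : Tendsto Λ atTop atTop)
    (hUdens : ∀ n i, ∀ g : ℝ → ℝ, Measurable g → (∀ x, 0 ≤ g x) →
      ∫ ω, g (U n i ω) = (lam / Λ n) * ∫ t in Set.Icc (0 : ℝ) (n : ℝ), g t * μ t)
    (hHdens : ∀ i, ∀ g : ℝ → ℝ, Measurable g → (∀ x, 0 ≤ g x) →
      ∫ ω, g (H i ω) = ∫ h in Set.Ici (0 : ℝ), g h * q h)
    (hmH : mH = ∫ h in Set.Ici (0 : ℝ), h * q h)
    (hmH2 : mH2 = ∫ h in Set.Ici (0 : ℝ), h ^ 2 * q h)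
    (hmHint : IntegrableOn (fun h => h * q h) (Set.Ici 0))
    (hmH2int : IntegrableOn (fun h => h ^ 2 * q h) (Set.Ici 0))
    (hindep : ∀ n, iIndepFun (Sum.elim H (U n)) volume)
    (In : ℕ → Ω → ℝ)
    (hIn : ∀ n ω, In n ω = P * ∑ i ∈ Finset.range ⌈Λ n⌉₊, H i ω * G (U n i ω))
    (hGμ : IntegrableOn (fun t => G t * μ t) (Set.Ici 0))
    (hG2μ : IntegrableOn (fun t => (G t) ^ 2 * μ t) (Set.Ici 0)) :
    (∀ n, variance (In n) volume
        = (⌈Λ n⌉₊ : ℝ) *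
            ((lam * P ^ 2 * mH2 / Λ n) * (∫ t in Set.Icc (0 : ℝ) (n : ℝ), (G t) ^ 2 * μ t)
              - (lam ^ 2 * P ^ 2 * mH ^ 2 / (Λ n) ^ 2)
                  * (∫ t in Set.Icc (0 : ℝ) (n : ℝ), G t * μ t) ^ 2)) ∧
      Tendsto (fun n => variance (In n) volume) atTop
        (nhds (lam * P ^ 2 * mH2 * ∫ t in Set.Ici (0 : ℝ), (G t) ^ 2 * μ t)) := by
  have hq1 : (∫ h in Set.Ici (0:ℝ), q h) = 1 := by
    have h0 := hHdens 0 (fun _ => (1:ℝ)) measurable_const (fun _ => zero_le_one)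
    simpa using h0.symm
  have hqInt : IntegrableOn q (Set.Ici (0:ℝ)) :=
    integrable_of_integral_ne_zero' (by rw [hq1]; norm_num)
  have hmHnn : 0 ≤ mH := hmH ▸ setIntegral_nonneg measurableSet_Ici
    (fun h hh => mul_nonneg hh (hqnn h))
  have hmH2nn : 0 ≤ mH2 := hmH2 ▸ setIntegral_nonneg measurableSet_Ici
    (fun h _ => mul_nonneg (sq_nonneg h) (hqnn h))
  have hFp : ∀ i, Integrable (fun ω => max (H i ω) 0 + 1) volume ∧
      (∫ ω, (max (H i ω) 0 + 1)) = mH + 1 := by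
    intro i
    have hmeas : Measurable (fun h : ℝ => max h 0 + 1) :=
      (measurable_id.max measurable_const).add_const 1
    have hd := hHdens i _ hmeas (fun x => by positivity)
    have hsplit : (∫ h in Set.Ici (0:ℝ), (max h 0 + 1) * q h) = mH + 1 := by
      have heq : ∀ h ∈ Set.Ici (0:ℝ), (max h 0 + 1) * q h = h * q h + q h := by
        intro h hh; rw [max_eq_left hh]; ring
      rw [setIntegral_congr_fun measurableSet_Ici heq, integral_add hmHint hqInt, ← hmH, hq1]
    have hval : (∫ ω, (max (H i ω) 0 + 1)) = mH + 1 := by rw [hd, hsplit]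
    exact ⟨integrable_of_integral_ne_zero' (by rw [hval]; linarith), hval⟩
  have hFm : ∀ i, Integrable (fun ω => max (-(H i ω)) 0 + 1) volume ∧
      (∫ ω, (max (-(H i ω)) 0 + 1)) = 1 := by
    intro i
    have hmeas : Measurable (fun h : ℝ => max (-h) 0 + 1) :=
      (measurable_neg.max measurable_const).add_const 1
    have hd := hHdens i _ hmeas (fun x => by positivity)
    have hsplit : (∫ h in Set.Ici (0:ℝ), (max (-h) 0 + 1) * q h) = 1 := by
      have heq : ∀ h ∈ Set.Ici (0:ℝ), (max (-h) 0 + 1) * q h = q h := by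
        intro h hh
        rw [max_eq_right (by simpa using hh)]; ring
      rw [setIntegral_congr_fun measurableSet_Ici heq, hq1]
    have hval : (∫ ω, (max (-(H i ω)) 0 + 1)) = 1 := by rw [hd, hsplit]
    exact ⟨integrable_of_integral_ne_zero' (by rw [hval]; norm_num), hval⟩
  have hHpm : ∀ i, H i = fun ω => (max (H i ω) 0 + 1) - (max (-(H i ω)) 0 + 1) := by
    intro i; funext ω
    have h := max_zero_sub_max_neg_zero_eq_self (H i ω); linarith
  have hHaesm : ∀ i, AEStronglyMeasurable (H i) volume := by
    intro i
    rw [hHpm i]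
    exact ((hFp i).1.sub (hFm i).1).aestronglyMeasurable
  have hEH : ∀ i, (∫ ω, H i ω) = mH := by
    intro i
    rw [hHpm i, integral_sub (hFp i).1 (hFm i).1, (hFp i).2, (hFm i).2]; ring
  have hEH2 : ∀ i, (∫ ω, (H i ω)^2) = mH2 := by
    intro i
    have := hHdens i (fun h => h^2) (measurable_id.pow_const 2) (fun x => sq_nonneg x)
    rw [this, ← hmH2]
  have hH2int : ∀ i, Integrable (fun ω => (H i ω)^2) volume := by
    intro i
    have hmeas : Measurable (fun h : ℝ => h^2 + 1) := (measurable_id.pow_const 2).add_const 1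
    have hd := hHdens i _ hmeas (fun x => by positivity)
    have hsplit : (∫ h in Set.Ici (0:ℝ), (h^2 + 1) * q h) = mH2 + 1 := by
      have heq : ∀ h ∈ Set.Ici (0:ℝ), (h^2 + 1) * q h = h^2 * q h + q h := by
        intro h _; ring
      rw [setIntegral_congr_fun measurableSet_Ici heq, integral_add hmH2int hqInt, ← hmH2, hq1]
    have hInt : Integrable (fun ω => (H i ω)^2 + 1) volume :=
      integrable_of_integral_ne_zero' (by rw [hd, hsplit]; linarith)
    exact (hInt.sub (integrable_const 1)).congr (Filter.Eventually.of_forall fun ω => by simp)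
  have hHL2 : ∀ i, MemLp (H i) 2 volume :=
    fun i => (memLp_two_iff_integrable_sq (hHaesm i)).2 (hH2int i)
  have key : ∀ n, variance (In n) volume
      = (⌈Λ n⌉₊ : ℝ) *
          ((lam * P ^ 2 * mH2 / Λ n) * (∫ t in Set.Icc (0 : ℝ) (n : ℝ), (G t) ^ 2 * μ t)
            - (lam ^ 2 * P ^ 2 * mH ^ 2 / (Λ n) ^ 2)
                * (∫ t in Set.Icc (0 : ℝ) (n : ℝ), G t * μ t) ^ 2) := by
    intro n
    classical
    have hΛn := hΛpos n
    set c := lam / Λ n with hc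
    have hcpos : 0 < c := div_pos hlam hΛn
    have hμI : (∫ t in Set.Icc (0:ℝ) (n:ℝ), μ t) = Λ n / lam := by
      rw [hΛ n]; field_simp
    have hμint : IntegrableOn μ (Set.Icc (0:ℝ) (n:ℝ)) :=
      integrable_of_integral_ne_zero' (by rw [hμI]; exact ne_of_gt (div_pos hΛn hlam))
    have hIμ1 : c * (∫ t in Set.Icc (0:ℝ) (n:ℝ), μ t) = 1 := by
      rw [hμI, hc]; field_simp
    have hGμn : IntegrableOn (fun t => G t * μ t) (Set.Icc (0:ℝ) (n:ℝ)) :=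
      hGμ.mono_set (Set.Icc_subset_Ici_self)
    have hG2μn : IntegrableOn (fun t => (G t)^2 * μ t) (Set.Icc (0:ℝ) (n:ℝ)) :=
      hG2μ.mono_set (Set.Icc_subset_Ici_self)
    have hGμnn : 0 ≤ ∫ t in Set.Icc (0:ℝ) (n:ℝ), G t * μ t :=
      setIntegral_nonneg measurableSet_Icc fun t _ => mul_nonneg (hGnn t) (hμnn t)
    have hVaesm : ∀ i, AEStronglyMeasurable (fun ω => G (U n i ω)) volume := by
      intro i
      have hmeas : Measurable (fun t : ℝ => G t + 1) := hGmeas.add_const 1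
      have hd := hUdens n i _ hmeas (fun x => by have := hGnn x; linarith)
      have hsplit : (∫ t in Set.Icc (0:ℝ) (n:ℝ), (G t + 1) * μ t)
          = (∫ t in Set.Icc (0:ℝ) (n:ℝ), G t * μ t) + ∫ t in Set.Icc (0:ℝ) (n:ℝ), μ t := by
        have heq : (fun t => (G t + 1) * μ t) = fun t => G t * μ t + μ t :=
          funext fun t => by ring
        rw [heq, integral_add hGμn hμint]
      have hval : (∫ ω, (G (U n i ω) + 1)) = c * (∫ t in Set.Icc (0:ℝ) (n:ℝ), G t * μ t) + 1 := by
        rw [hd, hsplit, mul_add, hIμ1, ← hc]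
      have hInt : Integrable (fun ω => G (U n i ω) + 1) volume :=
        integrable_of_integral_ne_zero'
          (by rw [hval]; nlinarith [mul_nonneg hcpos.le hGμnn])
      have hInt2 : Integrable (fun ω => G (U n i ω)) volume :=
        (hInt.sub (integrable_const 1)).congr (Filter.Eventually.of_forall fun ω => by simp)
      exact hInt2.aestronglyMeasurable
    have hMGnn : 0 ≤ MG := le_trans (hGnn 0) (hGbd 0)
    have hVL2 : ∀ i, MemLp (fun ω => G (U n i ω)) 2 volume := fun i =>
      MemLp.of_bound (hVaesm i) MG (Filter.Eventually.of_forall fun ω => by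
        rw [Real.norm_eq_abs, abs_of_nonneg (hGnn _)]; exact hGbd _)
    have hEV : ∀ i, (∫ ω, G (U n i ω)) = c * ∫ t in Set.Icc (0:ℝ) (n:ℝ), G t * μ t :=
      fun i => hUdens n i G hGmeas hGnn
    have hEV2 : ∀ i, (∫ ω, (G (U n i ω))^2) = c * ∫ t in Set.Icc (0:ℝ) (n:ℝ), (G t)^2 * μ t :=
      fun i => hUdens n i (fun t => (G t)^2) (hGmeas.pow_const 2) (fun t => sq_nonneg _)
    have hHV : ∀ i, IndepFun (H i) (fun ω => G (U n i ω)) volume := by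
      intro i
      have h1 : IndepFun (Sum.elim H (U n) (Sum.inl i)) (Sum.elim H (U n) (Sum.inr i)) volume :=
        (hindep n).indepFun (by simp)
      exact h1.comp measurable_id hGmeas
    have hEX : ∀ i, (∫ ω, H i ω * G (U n i ω))
        = mH * (c * ∫ t in Set.Icc (0:ℝ) (n:ℝ), G t * μ t) := by
      intro i
      have h := (hHV i).integral_mul_eq_mul_integral (hHaesm i) (hVaesm i)
      simpa [Pi.mul_apply, hEH i, hEV i] using h
    have hEX2 : ∀ i, (∫ ω, (H i ω * G (U n i ω))^2)
        = mH2 * (c * ∫ t in Set.Icc (0:ℝ) (n:ℝ), (G t)^2 * μ t) := by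
      intro i
      have hind2 : IndepFun (fun ω => (H i ω)^2) (fun ω => (G (U n i ω))^2) volume :=
        (hHV i).comp (measurable_id.pow_const 2) (measurable_id.pow_const 2)
      have h := hind2.integral_mul_eq_mul_integral ((hHaesm i).pow 2) ((hVaesm i).pow 2)
      simp only [Pi.mul_apply, hEH2 i, hEV2 i] at h
      simpa [mul_pow] using h
    have hXL2 : ∀ i, MemLp (fun ω => H i ω * G (U n i ω)) 2 volume := by
      intro i
      refine MemLp.of_le ((hHL2 i).const_mul MG) ((hHaesm i).mul (hVaesm i))
        (Filter.Eventually.of_forall fun ω => ?_)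
      rw [Real.norm_eq_abs, Real.norm_eq_abs, abs_mul, abs_mul, abs_of_nonneg hMGnn]
      have hb : |G (U n i ω)| ≤ MG := by rw [abs_of_nonneg (hGnn _)]; exact hGbd _
      calc |H i ω| * |G (U n i ω)| ≤ |H i ω| * MG :=
            mul_le_mul_of_nonneg_left hb (abs_nonneg _)
        _ = MG * |H i ω| := mul_comm _ _
    have hVarX : ∀ i, variance (fun ω => H i ω * G (U n i ω)) volume
        = mH2 * (c * ∫ t in Set.Icc (0:ℝ) (n:ℝ), (G t)^2 * μ t)
          - (mH * (c * ∫ t in Set.Icc (0:ℝ) (n:ℝ), G t * μ t))^2 := by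
      intro i
      rw [variance_eq_sub (hXL2 i)]
      simp only [Pi.pow_apply]
      rw [hEX2 i, hEX i]
    -- pairwise independence via measurable modification
    set W : (ℕ ⊕ ℕ) → Ω → ℝ := Sum.elim H (fun i ω => G (U n i ω)) with hW
    have hWindep : iIndepFun W volume := by
      have h := (hindep n).comp (mγ := fun _ => inferInstance)
        (fun k => Sum.rec (motive := fun _ => ℝ → ℝ) (fun _ => id) (fun _ => G) k)
        (fun k => by cases k <;> simp [measurable_id, hGmeas])
      have heq : (fun k => (Sum.rec (motive := fun _ => ℝ → ℝ) (fun _ => id) (fun _ => G) k)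
          ∘ Sum.elim H (U n) k) = W := by
        funext k; cases k <;> rfl
      rwa [heq] at h
    have hWaesm : ∀ k, AEStronglyMeasurable (W k) volume := by
      rintro (i | i)
      · exact hHaesm i
      · exact hVaesm i
    set W' : (ℕ ⊕ ℕ) → Ω → ℝ := fun k => (hWaesm k).mk (W k) with hW'
    have hW'meas : ∀ k, Measurable (W' k) := fun k => (hWaesm k).measurable_mk
    have hWW' : ∀ k, W k =ᵐ[volume] W' k := fun k => (hWaesm k).ae_eq_mk
    have hW'indep : iIndepFun W' volume :=
      iIndepFun_congr_ae hWindep hWW'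
    have hpairwise : ∀ i j : ℕ, i ≠ j →
        IndepFun (fun ω => H i ω * G (U n i ω)) (fun ω => H j ω * G (U n j ω)) volume := by
      intro i j hij
      have h4 := hW'indep.indepFun_prodMk_prodMk hW'meas
        (Sum.inl i) (Sum.inr i) (Sum.inl j) (Sum.inr j)
        (by simp [hij]) (by simp) (by simp) (by simp [hij])
      have hmul : Measurable (fun p : ℝ × ℝ => p.1 * p.2) := measurable_fst.mul measurable_snd
      have h5 := h4.comp hmul hmul
      refine h5.congr ?_ ?_
      · filter_upwards [hWW' (Sum.inl i), hWW' (Sum.inr i)] with ω h1 h2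
        show W' (Sum.inl i) ω * W' (Sum.inr i) ω = H i ω * G (U n i ω)
        rw [← h1, ← h2]; rfl
      · filter_upwards [hWW' (Sum.inl j), hWW' (Sum.inr j)] with ω h1 h2
        show W' (Sum.inl j) ω * W' (Sum.inr j) ω = H j ω * G (U n j ω)
        rw [← h1, ← h2]; rfl
    have hsum : variance (∑ i ∈ Finset.range ⌈Λ n⌉₊, fun ω => H i ω * G (U n i ω)) volume
        = ∑ i ∈ Finset.range ⌈Λ n⌉₊, variance (fun ω => H i ω * G (U n i ω)) volume :=
      IndepFun.variance_sum (fun i _ => hXL2 i) (fun i _ j _ hij => hpairwise i j hij)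
    have hIn' : In n = P • (∑ i ∈ Finset.range ⌈Λ n⌉₊, fun ω => H i ω * G (U n i ω)) := by
      funext ω; rw [hIn n ω]; simp [Finset.sum_apply]
    rw [hIn', variance_smul, hsum]
    simp only [hVarX]
    rw [Finset.sum_const, Finset.card_range, nsmul_eq_mul]
    have hΛne : Λ n ≠ 0 := ne_of_gt hΛn
    rw [hc]
    field_simp
  refine ⟨key, ?_⟩
  have hIccm : ∀ n : ℕ, MeasurableSet (Set.Icc (0:ℝ) (n:ℝ)) := fun n => measurableSet_Icc
  have hmono : Monotone (fun n : ℕ => Set.Icc (0:ℝ) (n:ℝ)) :=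
    fun a b hab => Set.Icc_subset_Icc le_rfl (Nat.cast_le.2 hab)
  have hunion : (⋃ n : ℕ, Set.Icc (0:ℝ) (n:ℝ)) = Set.Ici (0:ℝ) := by
    ext x
    simp only [Set.mem_iUnion, Set.mem_Icc, Set.mem_Ici]
    exact ⟨fun ⟨n, h0, _⟩ => h0, fun hx => ⟨⌈x⌉₊, hx, Nat.le_ceil x⟩⟩
  have T2 : Tendsto (fun n : ℕ => ∫ t in Set.Icc (0:ℝ) (n:ℝ), (G t)^2 * μ t) atTop
      (nhds (∫ t in Set.Ici (0:ℝ), (G t)^2 * μ t)) := by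
    have h := tendsto_setIntegral_of_monotone hIccm hmono (by rw [hunion]; exact hG2μ)
    rwa [hunion] at h
  have T3 : Tendsto (fun n : ℕ => ∫ t in Set.Icc (0:ℝ) (n:ℝ), G t * μ t) atTop
      (nhds (∫ t in Set.Ici (0:ℝ), G t * μ t)) := by
    have h := tendsto_setIntegral_of_monotone hIccm hmono (by rw [hunion]; exact hGμ)
    rwa [hunion] at h
  have hinv : Tendsto (fun n => (Λ n)⁻¹) atTop (nhds 0) := hΛtop.inv_tendsto_atTop
  have T1 : Tendsto (fun n => (⌈Λ n⌉₊ : ℝ) / Λ n) atTop (nhds 1) := by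
    have hup : Tendsto (fun n => 1 + (Λ n)⁻¹) atTop (nhds (1 + 0)) :=
      tendsto_const_nhds.add hinv
    rw [add_zero] at hup
    refine tendsto_of_tendsto_of_tendsto_of_le_of_le tendsto_const_nhds hup ?_ ?_
    · intro n
      exact (one_le_div (hΛpos n)).2 (Nat.le_ceil _)
    · intro n
      rw [div_le_iff₀ (hΛpos n)]
      have h1 : (⌈Λ n⌉₊ : ℝ) ≤ Λ n + 1 := (Nat.ceil_lt_add_one (hΛpos n).le).le
      have h2 : (1 + (Λ n)⁻¹) * Λ n = Λ n + 1 := by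
        field_simp [ne_of_gt (hΛpos n)]
      linarith
  have T4 : Tendsto (fun n => (⌈Λ n⌉₊ : ℝ) / (Λ n)^2) atTop (nhds 0) := by
    have heq : (fun n => (⌈Λ n⌉₊ : ℝ) / (Λ n)^2)
        = fun n => ((⌈Λ n⌉₊ : ℝ) / Λ n) * (Λ n)⁻¹ := by
      funext n; rw [sq, ← div_div, div_eq_mul_inv]
    rw [heq]
    simpa using T1.mul hinv
  have hfun : (fun n => variance (In n) volume)
      = fun n => (lam * P^2 * mH2) * (((⌈Λ n⌉₊ : ℝ) / Λ n) * ∫ t in Set.Icc (0:ℝ) (n:ℝ), (G t)^2 * μ t)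
          - (lam^2 * P^2 * mH^2) * (((⌈Λ n⌉₊ : ℝ) / (Λ n)^2) * (∫ t in Set.Icc (0:ℝ) (n:ℝ), G t * μ t)^2) := by
    funext n
    rw [key n]
    field_simp [ne_of_gt (hΛpos n)]
  rw [hfun]
  have hT := (tendsto_const_nhds (x := lam * P^2 * mH2)).mul (T1.mul T2) |>.sub
    ((tendsto_const_nhds (x := lam^2 * P^2 * mH^2)).mul (T4.mul (T3.pow 2)))
  simpa using hT
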